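/- Let F be a field, and consider F(t) embedded in both the Laurent series field F((t⁻¹)) (completion with respect to the valuation at infinity) and F((t)) (completion with respect to the valuation at zero). For any nonempty open set V ⊆ F((t⁻¹)) and any nonempty open set W ⊆ F((t)), the intersection V ∩ W ∩ F(t) is nonempty. -/

import Mathlib

open FunctionField IsDedekindDomain
open Multiplicative WithZero

variable {F : Type*} [Field F] [DecidableEq (RatFunc F)]

/-- The canonical inclusion of `F(t)` into its completion `F((t⁻¹))` at infinity. -/
noncomputable def toFqtInfty (x : RatFunc F) : RatFunc.CompletionAtInfty F :=
  letI := inftyValuedFqt F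
  UniformSpace.Completion.coe' (α := RatFunc F) x

/-- The canonical inclusion of `F(t)` into its completion `F((t))` at zero
(the `X`-adic completion). -/
noncomputable def toFqtZero (x : RatFunc F) :
    (Polynomial.idealX F).adicCompletion (RatFunc F) :=
  (↑x : (Polynomial.idealX F).adicCompletion (RatFunc F))

lemma exists_ofAdd {a : ℤᵐ⁰} (ha : a ≠ 0) : ∃ m : ℤ, a = ↑(Multiplicative.ofAdd m) := by
  induction a using WithZero.recZeroCoe with
  | zero => exact absurd rfl ha
  | coe u => exact ⟨u.toAdd, by rw [ofAdd_toAdd]⟩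

lemma key_approx (x y : RatFunc F) (γ δ : ℤᵐ⁰ˣ) :
    ∃ z : RatFunc F, inftyValuation F (z - x) < (γ : ℤᵐ⁰) ∧
      (Polynomial.idealX F).valuation (RatFunc F) (z - y) < (δ : ℤᵐ⁰) := by
  by_cases hd : y - x = 0
  · obtain rfl : x = y := (sub_eq_zero.mp hd).symm
    exact ⟨x, by rw [sub_self, map_zero]; exact Units.zero_lt γ,
      by rw [sub_self, map_zero]; exact Units.zero_lt δ⟩
  -- extract integers
  have ha : inftyValuation F (y - x) ≠ 0 := (Valuation.ne_zero_iff _).mpr hd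
  have hb : (Polynomial.idealX F).valuation (RatFunc F) (y - x) ≠ 0 := (Valuation.ne_zero_iff _).mpr hd
  obtain ⟨m, hm⟩ := exists_ofAdd ha
  obtain ⟨n, hn⟩ := exists_ofAdd hb
  obtain ⟨g, hg⟩ := exists_ofAdd γ.ne_zero
  obtain ⟨e, he⟩ := exists_ofAdd δ.ne_zero
  set k : ℕ := (max 1 (max (m - g + 1) (n - e + 1))).toNat with hk
  have hk1 : 1 ≤ (k : ℤ) := le_trans (le_max_left _ _) (Int.self_le_toNat _)
  have hkm : m - g + 1 ≤ (k : ℤ) :=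
    le_trans (le_trans (le_max_left _ _) (le_max_right _ _)) (Int.self_le_toNat _)
  have hkn : n - e + 1 ≤ (k : ℤ) :=
    le_trans (le_trans (le_max_right _ _) (le_max_right _ _)) (Int.self_le_toNat _)
  -- the element 1 + X^k
  set p : RatFunc F := 1 + RatFunc.X ^ k with hp
  have hvXk : (Polynomial.idealX F).valuation (RatFunc F) ((RatFunc.X : RatFunc F) ^ k)
      = ↑(Multiplicative.ofAdd (-(k : ℤ))) := by
    rw [map_pow, Polynomial.valuation_X_eq_neg_one, WithZero.exp, ← WithZero.coe_pow, ← ofAdd_nsmul]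
    norm_num
  have hvXk' : inftyValuation F ((RatFunc.X : RatFunc F) ^ k)
      = ↑(Multiplicative.ofAdd ((k : ℤ))) := by
    rw [map_pow]
    erw [inftyValuation.X]
    rw [WithZero.exp, ← WithZero.coe_pow, ← ofAdd_nsmul]
    norm_num
  have hv0p : (Polynomial.idealX F).valuation (RatFunc F) p = 1 := by
    rw [hp, Valuation.map_add_of_distinct_val, map_one, hvXk, max_eq_left]
    · rw [← WithZero.coe_one, WithZero.coe_le_coe, ← ofAdd_zero, ofAdd_le]
      omega
    · rw [map_one, hvXk, ← WithZero.coe_one, ← ofAdd_zero]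
      intro h
      rw [WithZero.coe_inj] at h
      have := congrArg Multiplicative.toAdd h
      simp only [toAdd_ofAdd] at this
      omega
  have hvip : inftyValuation F p = ↑(Multiplicative.ofAdd ((k : ℤ))) := by
    rw [hp, Valuation.map_add_of_distinct_val, map_one, hvXk', max_eq_right]
    · rw [← WithZero.coe_one, WithZero.coe_le_coe, ← ofAdd_zero, ofAdd_le]
      omega
    · rw [map_one, hvXk', ← WithZero.coe_one, ← ofAdd_zero]
      intro h
      rw [WithZero.coe_inj] at h
      have := congrArg Multiplicative.toAdd h
      simp only [toAdd_ofAdd] at this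
      omega
  have hpne : p ≠ 0 := by
    intro h
    rw [h, map_zero] at hv0p
    exact zero_ne_one hv0p
  refine ⟨x + (y - x) * p⁻¹, ?_, ?_⟩
  · have : x + (y - x) * p⁻¹ - x = (y - x) * p⁻¹ := by ring
    rw [this, map_mul, map_inv₀, hm, hvip, hg, ← WithZero.coe_inv, ← WithZero.coe_mul,
      WithZero.coe_lt_coe, ← ofAdd_neg, ← ofAdd_add, ofAdd_lt]
    omega
  · have : x + (y - x) * p⁻¹ - y = -((y - x) * RatFunc.X ^ k * p⁻¹) := by
      field_simp
      ring
    rw [this, Valuation.map_neg, map_mul, map_mul, map_inv₀, hn, hvXk, hv0p, inv_one, mul_one,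
      he, ← WithZero.coe_mul, WithZero.coe_lt_coe, ← ofAdd_add, ofAdd_lt]
    omega

/-- For any nonempty open `V ⊆ F((t⁻¹))` and nonempty open `W ⊆ F((t))`, there is an element
of `F(t)` lying in both: `V ∩ W ∩ F(t) ≠ ∅`. -/
theorem stmt_3 (V : Set (RatFunc.CompletionAtInfty F)) (hV : IsOpen V) (hVne : V.Nonempty)
    (W : Set ((Polynomial.idealX F).adicCompletion (RatFunc F)))
    (hW : IsOpen W) (hWne : W.Nonempty) :
    ∃ x : RatFunc F, toFqtInfty x ∈ V ∧ toFqtZero x ∈ W := by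
  have hdV : DenseRange (toFqtInfty (F := F)) := by
    letI := inftyValuedFqt F
    exact UniformSpace.Completion.denseRange_coe
  obtain ⟨x, hx⟩ := hdV.exists_mem_open hV hVne
  have hdW : DenseRange (toFqtZero (F := F)) :=
    HeightOneSpectrum.denseRange_algebraMap (K := RatFunc F) (v := Polynomial.idealX F)
  obtain ⟨y, hy⟩ := hdW.exists_mem_open hW hWne
  obtain ⟨γ, hγ⟩ := Valued.mem_nhds.mp (hV.mem_nhds hx)
  obtain ⟨δ, hδ⟩ := Valued.mem_nhds.mp (hW.mem_nhds hy)
  obtain ⟨z, hz1, hz2⟩ := key_approx x y (Units.map (MonoidWithZeroHom.ValueGroup₀.embedding).toMonoidHom γ) (Units.map (MonoidWithZeroHom.ValueGroup₀.embedding).toMonoidHom δ)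
  refine ⟨z, hγ ?_, hδ ?_⟩
  · refine (Valuation.restrict_lt_iff_lt_embedding _).mpr ?_
    show Valued.v (toFqtInfty z - toFqtInfty x) < ((Units.map (MonoidWithZeroHom.ValueGroup₀.embedding).toMonoidHom γ) : ℤᵐ⁰)
    have h1 : toFqtInfty z - toFqtInfty x = toFqtInfty (z - x) := by
      letI := inftyValuedFqt F
      exact (UniformSpace.Completion.coe_sub z x).symm
    have h2 : (Valued.v (toFqtInfty (z - x)) : ℤᵐ⁰) = inftyValuation F (z - x) := by
      letI := inftyValuedFqt F
      exact Valued.valuedCompletion_apply (z - x)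
    rw [h1, h2]
    exact hz1
  · refine (Valuation.restrict_lt_iff_lt_embedding _).mpr ?_
    show Valued.v (toFqtZero z - toFqtZero y) < ((Units.map (MonoidWithZeroHom.ValueGroup₀.embedding).toMonoidHom δ) : ℤᵐ⁰)
    have h1 : toFqtZero z - toFqtZero y = toFqtZero (z - y) :=
      (map_sub (algebraMap (RatFunc F) ((Polynomial.idealX F).adicCompletion (RatFunc F))) z y).symm
    have h2 : (Valued.v (toFqtZero (z - y)) : ℤᵐ⁰) = (Polynomial.idealX F).valuation (RatFunc F) (z - y) :=
      HeightOneSpectrum.valuedAdicCompletion_eq_valuation' _ (z - y)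
    rw [h1, h2]
    exact hz2
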